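/- Let S and A be finite nonempty sets, γ ∈ (0,1), μ a probability distribution on S, π(a∣s) a policy (nonnegative, Σ_a π(a∣s) = 1), and let (R, P) and (R_σ, P_σ) be two MDPs on (S, A), where P(·∣s,a) and P_σ(·∣s,a) are probability distributions on S and R, R_σ : S × A → ℝ. Define the trajectory marginals of the first MDP by ρ_0(s,a) = μ(s) π(a∣s) and ρ_{t+1}(s',a') = Σ_{s,a} ρ_t(s,a) P(s'∣s,a) π(a'∣s'), set the discounted visitation d^π(s,a) = Σ_{t=0}^∞ γ^t ρ_t(s,a), and let η(π) = Σ_{s,a} d^π(s,a) R(s,a); define ρ̄_t, d̄^π, and η̄(π) analogously with P replaced by P_σ and R replaced by R_σ. Let r̄_max = max_{s,a} |R_σ(s,a)| and TV(p‖q) = (1/2) Σ_{s'} |p(s') − q(s')|. Then |η(π) − η̄(π)| ≤ ε_r + ε_m, where ε_r = Σ_{s,a} d^π(s,a) |R(s,a) − R_σ(s,a)| and ε_m = (2 γ r̄_max / (1−γ)²) Σ_{s,a} d^π(s,a) TV(P(·∣s,a) ‖ P_σ(·∣s,a)). -/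

import Mathlib

set_option maxHeartbeats 2000000

lemma namdp_aux_marg {S A : Type*} [Fintype S] [Fintype A]
    (μ : S → ℝ) (hμ0 : ∀ s, 0 ≤ μ s) (hμ1 : ∑ s, μ s = 1)
    (pol : S → A → ℝ) (hpol0 : ∀ s a, 0 ≤ pol s a) (hpol1 : ∀ s, ∑ a, pol s a = 1)
    (P : S → A → S → ℝ)
    (hP0 : ∀ s a s', 0 ≤ P s a s') (hP1 : ∀ s a, ∑ s', P s a s' = 1)
    (ρ : ℕ → S → A → ℝ)
    (h0 : ∀ s a, ρ 0 s a = μ s * pol s a)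
    (hsucc : ∀ t s' a', ρ (t + 1) s' a' = ∑ s, ∑ a, ρ t s a * P s a s' * pol s' a') :
    ∀ t, (∀ s a, 0 ≤ ρ t s a) ∧ (∑ s, ∑ a, ρ t s a = 1) := by
  intro t
  induction t with
  | zero =>
    constructor
    · intro s a; rw [h0]; exact mul_nonneg (hμ0 s) (hpol0 s a)
    · simp_rw [h0, ← Finset.mul_sum, hpol1, mul_one, hμ1]
  | succ t ih =>
    obtain ⟨ihnn, ihsum⟩ := ih
    constructor
    · intro s' a'
      rw [hsucc]
      refine Finset.sum_nonneg fun s _ => Finset.sum_nonneg fun a _ => ?_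
      exact mul_nonneg (mul_nonneg (ihnn s a) (hP0 s a s')) (hpol0 s' a')
    · simp_rw [hsucc, ← Finset.sum_mul, ← Finset.mul_sum, hpol1, mul_one]
      rw [Finset.sum_comm]
      calc ∑ s, ∑ s', ∑ a, ρ t s a * P s a s'
          = ∑ s, ∑ a, ∑ s', ρ t s a * P s a s' :=
            Finset.sum_congr rfl fun s _ => Finset.sum_comm
        _ = 1 := by simp_rw [← Finset.mul_sum, hP1, mul_one, ihsum]

lemma namdp_aux_delta {S A : Type*} [Fintype S] [Fintype A]
    (pol : S → A → ℝ) (hpol0 : ∀ s a, 0 ≤ pol s a) (hpol1 : ∀ s, ∑ a, pol s a = 1)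
    (P Pσ : S → A → S → ℝ)
    (hPσ0 : ∀ s a s', 0 ≤ Pσ s a s') (hPσ1 : ∀ s a, ∑ s', Pσ s a s' = 1)
    (ρ ρσ : ℕ → S → A → ℝ) (t : ℕ)
    (hnn : ∀ s a, 0 ≤ ρ t s a)
    (hsucc : ∀ s' a', ρ (t + 1) s' a' = ∑ s, ∑ a, ρ t s a * P s a s' * pol s' a')
    (hσsucc : ∀ s' a', ρσ (t + 1) s' a' = ∑ s, ∑ a, ρσ t s a * Pσ s a s' * pol s' a') :
    ∑ s', ∑ a', |ρ (t+1) s' a' - ρσ (t+1) s' a'| ≤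
      (∑ s, ∑ a, |ρ t s a - ρσ t s a|) +
        ∑ s, ∑ a, ρ t s a * ∑ s', |P s a s' - Pσ s a s'| := by
  have key : ∀ s' a', |ρ (t+1) s' a' - ρσ (t+1) s' a'| ≤
      (∑ s, ∑ a, (ρ t s a * |P s a s' - Pσ s a s'| + |ρ t s a - ρσ t s a| * Pσ s a s'))
        * pol s' a' := by
    intro s' a'
    rw [hsucc, hσsucc, ← Finset.sum_sub_distrib]
    simp_rw [← Finset.sum_sub_distrib]
    calc |∑ s, ∑ a, (ρ t s a * P s a s' * pol s' a' - ρσ t s a * Pσ s a s' * pol s' a')|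
        ≤ ∑ s, ∑ a, |ρ t s a * P s a s' * pol s' a' - ρσ t s a * Pσ s a s' * pol s' a'| := by
          refine (Finset.abs_sum_le_sum_abs _ _).trans ?_
          exact Finset.sum_le_sum fun s _ => Finset.abs_sum_le_sum_abs _ _
      _ ≤ ∑ s, ∑ a, (ρ t s a * |P s a s' - Pσ s a s'| + |ρ t s a - ρσ t s a| * Pσ s a s')
            * pol s' a' := by
          refine Finset.sum_le_sum fun s _ => Finset.sum_le_sum fun a _ => ?_
          have h1 : ρ t s a * P s a s' * pol s' a' - ρσ t s a * Pσ s a s' * pol s' a'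
              = (ρ t s a * (P s a s' - Pσ s a s')
                  + (ρ t s a - ρσ t s a) * Pσ s a s') * pol s' a' := by ring
          rw [h1, abs_mul, abs_of_nonneg (hpol0 s' a')]
          refine mul_le_mul_of_nonneg_right ?_ (hpol0 s' a')
          refine (abs_add_le _ _).trans (add_le_add ?_ ?_)
          · rw [abs_mul, abs_of_nonneg (hnn s a)]
          · rw [abs_mul, abs_of_nonneg (hPσ0 s a s')]
      _ = (∑ s, ∑ a, (ρ t s a * |P s a s' - Pσ s a s'| + |ρ t s a - ρσ t s a| * Pσ s a s'))
            * pol s' a' := by simp_rw [Finset.sum_mul]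
  calc ∑ s', ∑ a', |ρ (t+1) s' a' - ρσ (t+1) s' a'|
      ≤ ∑ s', ∑ a',
          (∑ s, ∑ a, (ρ t s a * |P s a s' - Pσ s a s'| + |ρ t s a - ρσ t s a| * Pσ s a s'))
            * pol s' a' :=
        Finset.sum_le_sum fun s' _ => Finset.sum_le_sum fun a' _ => key s' a'
    _ = ∑ s', ∑ s, ∑ a, (ρ t s a * |P s a s' - Pσ s a s'| + |ρ t s a - ρσ t s a| * Pσ s a s') := by
        simp_rw [← Finset.mul_sum, hpol1, mul_one]
    _ = ∑ s, ∑ a, ∑ s', (ρ t s a * |P s a s' - Pσ s a s'| + |ρ t s a - ρσ t s a| * Pσ s a s') := by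
        rw [Finset.sum_comm]
        exact Finset.sum_congr rfl fun s _ => Finset.sum_comm
    _ = (∑ s, ∑ a, |ρ t s a - ρσ t s a|) +
          ∑ s, ∑ a, ρ t s a * ∑ s', |P s a s' - Pσ s a s'| := by
        have h2 : ∀ (s : S) (a : A),
            ∑ s', (ρ t s a * |P s a s' - Pσ s a s'| + |ρ t s a - ρσ t s a| * Pσ s a s')
              = ρ t s a * (∑ s', |P s a s' - Pσ s a s'|) + |ρ t s a - ρσ t s a| := by
          intro s a
          rw [Finset.sum_add_distrib, ← Finset.mul_sum, ← Finset.mul_sum, hPσ1, mul_one]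
        simp_rw [h2, Finset.sum_add_distrib]
        rw [add_comm]



/-- **Error Bound in NAMDP (Theorem 3).**
The expected discounted returns of a policy `pol` in the true MDP `(R, P)` and
in the NAMDP `(Rσ, Pσ)` differ by at most a reward-mismatch term plus a
transition-mismatch term in total variation, weighted by the discounted
state–action visitation of `pol` in the true MDP. -/
theorem namdp_return_error_bound
    {S A : Type*} [Fintype S] [Fintype A] [Nonempty S] [Nonempty A]
    (γ : ℝ) (hγ0 : 0 < γ) (hγ1 : γ < 1)
    (μ : S → ℝ) (hμ0 : ∀ s, 0 ≤ μ s) (hμ1 : ∑ s, μ s = 1)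
    (pol : S → A → ℝ) (hpol0 : ∀ s a, 0 ≤ pol s a) (hpol1 : ∀ s, ∑ a, pol s a = 1)
    (R Rσ : S → A → ℝ)
    (P Pσ : S → A → S → ℝ)
    (hP0 : ∀ s a s', 0 ≤ P s a s') (hP1 : ∀ s a, ∑ s', P s a s' = 1)
    (hPσ0 : ∀ s a s', 0 ≤ Pσ s a s') (hPσ1 : ∀ s a, ∑ s', Pσ s a s' = 1)
    (ρ ρσ : ℕ → S → A → ℝ)
    (hρ0 : ∀ s a, ρ 0 s a = μ s * pol s a)
    (hρsucc : ∀ t s' a', ρ (t + 1) s' a' = ∑ s, ∑ a, ρ t s a * P s a s' * pol s' a')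
    (hρσ0 : ∀ s a, ρσ 0 s a = μ s * pol s a)
    (hρσsucc : ∀ t s' a', ρσ (t + 1) s' a' = ∑ s, ∑ a, ρσ t s a * Pσ s a s' * pol s' a')
    (dπ dπσ : S → A → ℝ)
    (hdπ : ∀ s a, dπ s a = ∑' t : ℕ, γ ^ t * ρ t s a)
    (hdπσ : ∀ s a, dπσ s a = ∑' t : ℕ, γ ^ t * ρσ t s a)
    (η ησ : ℝ)
    (hη : η = ∑ s, ∑ a, dπ s a * R s a)
    (hησ : ησ = ∑ s, ∑ a, dπσ s a * Rσ s a)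
    (rmax : ℝ) (hrmax : rmax = ⨆ p : S × A, |Rσ p.1 p.2|) :
    |η - ησ| ≤
      (∑ s, ∑ a, dπ s a * |R s a - Rσ s a|) +
        (2 * γ * rmax / (1 - γ) ^ 2) *
          ∑ s, ∑ a, dπ s a * ((1 : ℝ) / 2 * ∑ s', |P s a s' - Pσ s a s'|) := by
  classical
  -- basic facts about the marginals
  have hρm := namdp_aux_marg μ hμ0 hμ1 pol hpol0 hpol1 P hP0 hP1 ρ hρ0 hρsucc
  have hρσm := namdp_aux_marg μ hμ0 hμ1 pol hpol0 hpol1 Pσ hPσ0 hPσ1 ρσ hρσ0 hρσsucc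
  have hρnn : ∀ t s a, 0 ≤ ρ t s a := fun t => (hρm t).1
  have hρσnn : ∀ t s a, 0 ≤ ρσ t s a := fun t => (hρσm t).1
  have hρsum : ∀ t, ∑ s, ∑ a, ρ t s a = 1 := fun t => (hρm t).2
  have hρσsum : ∀ t, ∑ s, ∑ a, ρσ t s a = 1 := fun t => (hρσm t).2
  have hle1 : ∀ (f : S → A → ℝ), (∀ s a, 0 ≤ f s a) → (∑ s, ∑ a, f s a = 1) →
      ∀ s a, f s a ≤ 1 := by
    intro f hnn hsum s a
    calc f s a ≤ ∑ a, f s a :=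
          Finset.single_le_sum (fun a _ => hnn s a) (Finset.mem_univ a)
      _ ≤ ∑ s, ∑ a, f s a :=
          Finset.single_le_sum (fun s _ => Finset.sum_nonneg fun a _ => hnn s a)
            (Finset.mem_univ s)
      _ = 1 := hsum
  have hρle1 : ∀ t s a, ρ t s a ≤ 1 := fun t => hle1 _ (hρnn t) (hρsum t)
  have hρσle1 : ∀ t s a, ρσ t s a ≤ 1 := fun t => hle1 _ (hρσnn t) (hρσsum t)
  have hγnn : ∀ t : ℕ, (0:ℝ) ≤ γ ^ t := fun t => pow_nonneg hγ0.le t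
  have hγs : Summable fun t : ℕ => γ ^ t := summable_geometric_of_lt_one hγ0.le hγ1
  have hsb : ∀ (g : ℕ → ℝ) (c : ℝ), (∀ t, 0 ≤ g t) → (∀ t, g t ≤ c) →
      Summable (fun t => γ ^ t * g t) := by
    intro g c hnn hb
    refine Summable.of_nonneg_of_le (fun t => mul_nonneg (hγnn t) (hnn t))
      (fun t => ?_) (hγs.mul_right c)
    exact mul_le_mul_of_nonneg_left (hb t) (hγnn t)
  have hsum1 : ∀ s a, Summable fun t => γ ^ t * ρ t s a := fun s a =>
    hsb _ 1 (fun t => hρnn t s a) (fun t => hρle1 t s a)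
  have hsum2 : ∀ s a, Summable fun t => γ ^ t * ρσ t s a := fun s a =>
    hsb _ 1 (fun t => hρσnn t s a) (fun t => hρσle1 t s a)
  have habssub : ∀ t s a, |ρ t s a - ρσ t s a| ≤ 2 := by
    intro t s a
    refine (abs_sub _ _).trans ?_
    rw [abs_of_nonneg (hρnn t s a), abs_of_nonneg (hρσnn t s a)]
    linarith [hρle1 t s a, hρσle1 t s a]
  -- the key sequences
  set Δ : ℕ → ℝ := fun t => ∑ s, ∑ a, |ρ t s a - ρσ t s a| with hΔdef
  set Efn : ℕ → ℝ := fun t => ∑ s, ∑ a, ρ t s a * ∑ s', |P s a s' - Pσ s a s'| with hEdef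
  have hΔnn : ∀ t, 0 ≤ Δ t := fun t =>
    Finset.sum_nonneg fun s _ => Finset.sum_nonneg fun a _ => abs_nonneg _
  have hΔle : ∀ t, Δ t ≤ 2 := by
    intro t
    calc Δ t ≤ ∑ s, ∑ a, (ρ t s a + ρσ t s a) := by
          refine Finset.sum_le_sum fun s _ => Finset.sum_le_sum fun a _ => ?_
          refine (abs_sub _ _).trans ?_
          rw [abs_of_nonneg (hρnn t s a), abs_of_nonneg (hρσnn t s a)]
      _ = 2 := by simp_rw [Finset.sum_add_distrib]; rw [hρsum, hρσsum]; norm_num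
  have hcnn : ∀ (s : S) (a : A), 0 ≤ ∑ s', |P s a s' - Pσ s a s'| := fun s a =>
    Finset.sum_nonneg fun _ _ => abs_nonneg _
  have hc2 : ∀ (s : S) (a : A), ∑ s', |P s a s' - Pσ s a s'| ≤ 2 := by
    intro s a
    calc ∑ s', |P s a s' - Pσ s a s'| ≤ ∑ s', (P s a s' + Pσ s a s') := by
          refine Finset.sum_le_sum fun s' _ => (abs_sub _ _).trans ?_
          rw [abs_of_nonneg (hP0 s a s'), abs_of_nonneg (hPσ0 s a s')]
      _ = 2 := by rw [Finset.sum_add_distrib, hP1, hPσ1]; norm_num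
  have hEnn : ∀ t, 0 ≤ Efn t := fun t =>
    Finset.sum_nonneg fun s _ => Finset.sum_nonneg fun a _ =>
      mul_nonneg (hρnn t s a) (hcnn s a)
  have hEle : ∀ t, Efn t ≤ 2 := by
    intro t
    calc Efn t ≤ ∑ s, ∑ a, ρ t s a * 2 :=
          Finset.sum_le_sum fun s _ => Finset.sum_le_sum fun a _ =>
            mul_le_mul_of_nonneg_left (hc2 s a) (hρnn t s a)
      _ = 2 := by simp_rw [← Finset.sum_mul]; rw [hρsum]; norm_num
  have hΔrec : ∀ t, Δ (t+1) ≤ Δ t + Efn t := fun t =>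
    namdp_aux_delta pol hpol0 hpol1 P Pσ hPσ0 hPσ1 ρ ρσ t (hρnn t)
      (fun s' a' => hρsucc t s' a') (fun s' a' => hρσsucc t s' a')
  have hΔs : Summable fun t => γ ^ t * Δ t := hsb _ 2 hΔnn hΔle
  have hEs : Summable fun t => γ ^ t * Efn t := hsb _ 2 hEnn hEle
  set D := ∑' t, γ ^ t * Δ t with hDdef
  set Ev := ∑' t, γ ^ t * Efn t with hEvdef
  have hD0 : 0 ≤ D := tsum_nonneg fun t => mul_nonneg (hγnn t) (hΔnn t)
  have hEv0 : 0 ≤ Ev := tsum_nonneg fun t => mul_nonneg (hγnn t) (hEnn t)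
  have hΔ0 : Δ 0 = 0 := by
    simp only [hΔdef]
    simp [hρ0, hρσ0]
  have hDrec : D ≤ γ * D + γ * Ev := by
    have hshift : Summable fun t => γ ^ (t+1) * Δ (t+1) := by
      exact (summable_nat_add_iff 1).mpr hΔs
    have hrhs : Summable fun t => γ ^ (t+1) * (Δ t + Efn t) := by
      have heq : (fun t => γ ^ (t+1) * (Δ t + Efn t))
          = fun t => γ * (γ ^ t * Δ t) + γ * (γ ^ t * Efn t) := by
        funext t; ring
      rw [heq]; exact (hΔs.mul_left γ).add (hEs.mul_left γ)
    calc D = γ ^ 0 * Δ 0 + ∑' t, γ ^ (t+1) * Δ (t+1) := Summable.tsum_eq_zero_add hΔs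
      _ = ∑' t, γ ^ (t+1) * Δ (t+1) := by rw [hΔ0]; simp
      _ ≤ ∑' t, γ ^ (t+1) * (Δ t + Efn t) :=
          Summable.tsum_le_tsum (fun t => mul_le_mul_of_nonneg_left (hΔrec t) (hγnn (t+1)))
            hshift hrhs
      _ = γ * D + γ * Ev := by
          have heq : (fun t => γ ^ (t+1) * (Δ t + Efn t))
              = fun t => γ * (γ ^ t * Δ t) + γ * (γ ^ t * Efn t) := by
            funext t; ring
          rw [heq, Summable.tsum_add (hΔs.mul_left γ) (hEs.mul_left γ), tsum_mul_left, tsum_mul_left]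
  -- Ev in terms of dπ
  have hEvEq : Ev = ∑ s, ∑ a, dπ s a * ∑ s', |P s a s' - Pσ s a s'| := by
    have hsum3 : ∀ (s : S) (a : A),
        Summable fun t => γ ^ t * (ρ t s a * ∑ s', |P s a s' - Pσ s a s'|) := by
      intro s a
      simpa [mul_assoc] using (hsum1 s a).mul_right (∑ s', |P s a s' - Pσ s a s'|)
    calc Ev = ∑' t, ∑ s, ∑ a, γ ^ t * (ρ t s a * ∑ s', |P s a s' - Pσ s a s'|) := by
          rw [hEvdef]
          exact tsum_congr fun t => by simp [hEdef, Finset.mul_sum]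
      _ = ∑ s, ∑ a, ∑' t, γ ^ t * (ρ t s a * ∑ s', |P s a s' - Pσ s a s'|) := by
          rw [Summable.tsum_finsetSum fun s _ => summable_sum fun a _ => hsum3 s a]
          exact Finset.sum_congr rfl fun s _ => Summable.tsum_finsetSum fun a _ => hsum3 s a
      _ = ∑ s, ∑ a, dπ s a * ∑ s', |P s a s' - Pσ s a s'| := by
          refine Finset.sum_congr rfl fun s _ => Finset.sum_congr rfl fun a _ => ?_
          rw [hdπ, ← tsum_mul_right]
          exact tsum_congr fun t => by ring
  have hdπnn : ∀ s a, 0 ≤ dπ s a := fun s a => by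
    rw [hdπ]; exact tsum_nonneg fun t => mul_nonneg (hγnn t) (hρnn t s a)
  -- rmax facts
  have hrm : ∀ (s : S) (a : A), |Rσ s a| ≤ rmax := by
    intro s a; rw [hrmax]
    exact le_ciSup (f := fun p : S × A => |Rσ p.1 p.2|)
      (Set.Finite.bddAbove (Set.finite_range _)) ⟨s, a⟩
  have hrm0 : 0 ≤ rmax :=
    le_trans (abs_nonneg _) (hrm (Classical.arbitrary S) (Classical.arbitrary A))
  -- pointwise bound on dπ - dπσ
  have habs : ∀ (s : S) (a : A), Summable fun t => γ ^ t * |ρ t s a - ρσ t s a| :=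
    fun s a => hsb _ 2 (fun t => abs_nonneg _) (fun t => habssub t s a)
  have hdd : ∀ (s : S) (a : A),
      |dπ s a - dπσ s a| ≤ ∑' t, γ ^ t * |ρ t s a - ρσ t s a| := by
    intro s a
    rw [hdπ, hdπσ, ← Summable.tsum_sub (hsum1 s a) (hsum2 s a)]
    have h2 : ∀ t : ℕ, |γ ^ t * ρ t s a - γ ^ t * ρσ t s a|
        = γ ^ t * |ρ t s a - ρσ t s a| := by
      intro t; rw [← mul_sub, abs_mul, abs_of_nonneg (hγnn t)]
    have hn := norm_tsum_le_tsum_norm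
      (f := fun t => γ ^ t * ρ t s a - γ ^ t * ρσ t s a)
      (by simpa [Real.norm_eq_abs, h2] using habs s a)
    simpa [Real.norm_eq_abs, h2] using hn
  have hDD : ∑ s, ∑ a, |dπ s a - dπσ s a| ≤ D := by
    calc ∑ s, ∑ a, |dπ s a - dπσ s a|
        ≤ ∑ s, ∑ a, ∑' t, γ ^ t * |ρ t s a - ρσ t s a| :=
          Finset.sum_le_sum fun s _ => Finset.sum_le_sum fun a _ => hdd s a
      _ = ∑' t, ∑ s, ∑ a, γ ^ t * |ρ t s a - ρσ t s a| := by
          rw [Summable.tsum_finsetSum fun s _ => summable_sum fun a _ => habs s a]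
          exact Finset.sum_congr rfl fun s _ => (Summable.tsum_finsetSum fun a _ => habs s a).symm
      _ = D := by
          rw [hDdef]
          exact tsum_congr fun t => by simp [hΔdef, Finset.mul_sum]
  -- decomposition of the return gap
  have hsplit : η - ησ = (∑ s, ∑ a, dπ s a * (R s a - Rσ s a))
      + ∑ s, ∑ a, (dπ s a - dπσ s a) * Rσ s a := by
    have hterm : ∀ (s : S) (a : A), dπ s a * R s a - dπσ s a * Rσ s a
        = dπ s a * (R s a - Rσ s a) + (dπ s a - dπσ s a) * Rσ s a := fun s a => by ring
    rw [hη, hησ, ← Finset.sum_sub_distrib]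
    simp_rw [← Finset.sum_sub_distrib, hterm, Finset.sum_add_distrib]
  have hA : |∑ s, ∑ a, dπ s a * (R s a - Rσ s a)|
      ≤ ∑ s, ∑ a, dπ s a * |R s a - Rσ s a| := by
    refine (Finset.abs_sum_le_sum_abs _ _).trans
      (Finset.sum_le_sum fun s _ => (Finset.abs_sum_le_sum_abs _ _).trans
        (Finset.sum_le_sum fun a _ => ?_))
    rw [abs_mul, abs_of_nonneg (hdπnn s a)]
  have hB : |∑ s, ∑ a, (dπ s a - dπσ s a) * Rσ s a| ≤ rmax * D := by
    calc |∑ s, ∑ a, (dπ s a - dπσ s a) * Rσ s a|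
        ≤ ∑ s, ∑ a, |dπ s a - dπσ s a| * |Rσ s a| := by
          refine (Finset.abs_sum_le_sum_abs _ _).trans
            (Finset.sum_le_sum fun s _ => (Finset.abs_sum_le_sum_abs _ _).trans
              (Finset.sum_le_sum fun a _ => ?_))
          rw [abs_mul]
      _ ≤ ∑ s, ∑ a, |dπ s a - dπσ s a| * rmax :=
          Finset.sum_le_sum fun s _ => Finset.sum_le_sum fun a _ =>
            mul_le_mul_of_nonneg_left (hrm s a) (abs_nonneg _)
      _ = (∑ s, ∑ a, |dπ s a - dπσ s a|) * rmax := by simp_rw [← Finset.sum_mul]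
      _ ≤ D * rmax := mul_le_mul_of_nonneg_right hDD hrm0
      _ = rmax * D := mul_comm _ _
  have hgoal2 : ∑ s, ∑ a, dπ s a * ((1:ℝ)/2 * ∑ s', |P s a s' - Pσ s a s'|)
      = (1/2) * Ev := by
    rw [hEvEq]
    have hterm : ∀ (s : S) (a : A), dπ s a * ((1:ℝ)/2 * ∑ s', |P s a s' - Pσ s a s'|)
        = (1/2) * (dπ s a * ∑ s', |P s a s' - Pσ s a s'|) := fun s a => by ring
    simp_rw [hterm, ← Finset.mul_sum]
  have hfin : rmax * D ≤ 2 * γ * rmax / (1-γ)^2 * ((1/2) * Ev) := by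
    have hβ : (0:ℝ) < 1 - γ := by linarith
    have h1 : D ≤ γ * Ev / (1 - γ) := by
      rw [le_div_iff₀ hβ]; nlinarith [hDrec]
    calc rmax * D ≤ rmax * (γ * Ev / (1-γ)) := mul_le_mul_of_nonneg_left h1 hrm0
      _ ≤ rmax * (γ * Ev / (1-γ)^2) := by
          refine mul_le_mul_of_nonneg_left ?_ hrm0
          refine div_le_div_of_nonneg_left (mul_nonneg hγ0.le hEv0) (by positivity) ?_
          nlinarith
      _ = 2 * γ * rmax / (1-γ)^2 * ((1/2) * Ev) := by ring
  calc |η - ησ| ≤ |∑ s, ∑ a, dπ s a * (R s a - Rσ s a)|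
        + |∑ s, ∑ a, (dπ s a - dπσ s a) * Rσ s a| := by
        rw [hsplit]; exact abs_add_le _ _
    _ ≤ (∑ s, ∑ a, dπ s a * |R s a - Rσ s a|) + rmax * D := add_le_add hA hB
    _ ≤ (∑ s, ∑ a, dπ s a * |R s a - Rσ s a|)
          + 2 * γ * rmax / (1-γ)^2 * ((1/2) * Ev) := add_le_add_right hfin _
    _ = (∑ s, ∑ a, dπ s a * |R s a - Rσ s a|) +
        (2 * γ * rmax / (1 - γ) ^ 2) *
          ∑ s, ∑ a, dπ s a * ((1 : ℝ) / 2 * ∑ s', |P s a s' - Pσ s a s'|) := by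
        rw [hgoal2]
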